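/- arXiv:1610.01058 — 6 statements merged into one kernel-verified Lean document; each statement's English description precedes it below -/
import Mathlib

section
/- Let X_1, ..., X_n be independent random variables each taking values in [0,1], let X = X_1 + ... + X_n and Y = min(X, 1). Then E[Y] ≥ (1 - 1/e) · min(E[X], 1). -/
open MeasureTheory ProbabilityTheory

lemma one_sub_sum_le_prod_one_sub {ι : Type*} (s : Finset ι) (x : ι → ℝ)
    (hx : ∀ i ∈ s, x i ∈ Set.Icc (0:ℝ) 1) :
    1 - ∑ i ∈ s, x i ≤ ∏ i ∈ s, (1 - x i) := by
  classical
  induction s using Finset.cons_induction with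
  | empty => simp
  | cons a s ha ih =>
    rw [Finset.sum_cons, Finset.prod_cons]
    have hxa := hx a (Finset.mem_cons_self a s)
    have ih' := ih (fun i hi => hx i (Finset.mem_cons_of_mem hi))
    have h1 : (0:ℝ) ≤ 1 - x a := by linarith [hxa.2]
    have h2 : (1 - x a) * (1 - ∑ i ∈ s, x i) ≤ (1 - x a) * ∏ i ∈ s, (1 - x i) :=
      mul_le_mul_of_nonneg_left ih' h1
    have hS : (0:ℝ) ≤ ∑ i ∈ s, x i :=
      Finset.sum_nonneg fun i hi => (hx i (Finset.mem_cons_of_mem hi)).1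
    nlinarith [hxa.1, hxa.2, hS]

lemma integral_prod_of_indep {Ω : Type*} [MeasureSpace Ω] [IsProbabilityMeasure (ℙ : Measure Ω)]
    {ι : Type*} (f : ι → Ω → ℝ)
    (hmeas : ∀ i, Measurable (f i))
    (hindep : iIndepFun f ℙ) (s : Finset ι) :
    ∫ ω, ∏ i ∈ s, f i ω ∂ℙ = ∏ i ∈ s, ∫ ω, f i ω ∂ℙ := by
  classical
  induction s using Finset.cons_induction with
  | empty => simp
  | cons a s ha ih =>
    have hind : IndepFun (∏ j ∈ s, f j) (f a) ℙ :=
      hindep.indepFun_finsetProd_of_notMem hmeas ha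
    have hmp : Measurable (∏ j ∈ s, f j) := by
      have : (∏ j ∈ s, f j) = fun ω => ∏ j ∈ s, f j ω := by
        ext ω; rw [Finset.prod_apply]
      rw [this]
      exact Finset.measurable_prod s fun i _ => hmeas i
    have := hind.integral_mul_eq_mul_integral hmp.aestronglyMeasurable (hmeas a).aestronglyMeasurable
    simp only [Finset.prod_cons]
    calc ∫ ω, f a ω * ∏ i ∈ s, f i ω ∂ℙ
        = ∫ ω, (∏ j ∈ s, f j) ω * f a ω ∂ℙ := by
          congr 1; ext ω; rw [Finset.prod_apply]; ring
      _ = (∫ ω, (∏ j ∈ s, f j) ω ∂ℙ) * ∫ ω, f a ω ∂ℙ := this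
      _ = (∫ ω, ∏ i ∈ s, f i ω ∂ℙ) * ∫ ω, f a ω ∂ℙ := by
          congr 1; apply integral_congr_ae; filter_upwards with ω
          rw [Finset.prod_apply]
      _ = (∫ ω, f a ω ∂ℙ) * ∏ i ∈ s, ∫ ω, f i ω ∂ℙ := by rw [ih]; ring

/-- Aggarwal et al.: for independent [0,1]-valued random variables X_i with sum X
and Y = min(X,1), we have E[Y] ≥ (1 - 1/e) · min(E[X], 1). -/
theorem stmt0 {Ω : Type*} [MeasureSpace Ω] [IsProbabilityMeasure (ℙ : Measure Ω)]
    {n : ℕ} (X : Fin n → Ω → ℝ)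
    (hmeas : ∀ i, Measurable (X i))
    (hindep : iIndepFun X ℙ)
    (hbound : ∀ i, ∀ᵐ ω ∂ℙ, X i ω ∈ Set.Icc (0 : ℝ) 1) :
    (1 - 1 / Real.exp 1) * min (∫ ω, (∑ i, X i ω) ∂ℙ) 1
      ≤ ∫ ω, min (∑ i, X i ω) 1 ∂ℙ := by
  classical
  -- integrability of each X i
  have hint : ∀ i, Integrable (X i) ℙ := by
    intro i
    refine Integrable.mono' (integrable_const (1:ℝ)) (hmeas i).aestronglyMeasurable ?_
    filter_upwards [hbound i] with ω hω
    rw [Real.norm_eq_abs, abs_le]; exact ⟨by linarith [hω.1], hω.2⟩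
  set μi : Fin n → ℝ := fun i => ∫ ω, X i ω ∂ℙ with hμi_def
  have hμi : ∀ i, μi i ∈ Set.Icc (0:ℝ) 1 := by
    intro i
    constructor
    · exact integral_nonneg_of_ae ((hbound i).mono fun ω h => h.1)
    · calc μi i ≤ ∫ _, (1:ℝ) ∂ℙ :=
            integral_mono_ae (hint i) (integrable_const 1) ((hbound i).mono fun ω h => h.2)
        _ = 1 := by simp
  have hEsum : ∫ ω, (∑ i, X i ω) ∂ℙ = ∑ i, μi i :=
    integral_finset_sum _ (fun i _ => hint i)
  -- the function g i = 1 - X i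
  set g : Fin n → Ω → ℝ := fun i ω => 1 - X i ω with hg_def
  have hgmeas : ∀ i, Measurable (g i) := fun i => (measurable_const.sub (hmeas i))
  have hgindep : iIndepFun g ℙ := by
    have : g = fun i => (fun x : ℝ => 1 - x) ∘ X i := rfl
    rw [this]
    exact hindep.comp _ (fun i => measurable_const.sub measurable_id)
  have hgint : ∀ i, ∫ ω, g i ω ∂ℙ = 1 - μi i := by
    intro i
    rw [hg_def]
    simp only
    rw [integral_sub (integrable_const 1) (hint i)]
    simp [hμi_def]
  have hprodint : ∫ ω, ∏ i, g i ω ∂ℙ = ∏ i, (1 - μi i) := by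
    rw [integral_prod_of_indep g hgmeas hgindep]
    exact Finset.prod_congr rfl fun i _ => hgint i
  -- a.e. pointwise bound
  have hae : ∀ᵐ ω ∂ℙ, ∀ i, X i ω ∈ Set.Icc (0:ℝ) 1 := ae_all_iff.2 hbound
  have hpt : ∀ᵐ ω ∂ℙ, 1 - ∏ i, g i ω ≤ min (∑ i, X i ω) 1 := by
    filter_upwards [hae] with ω hω
    refine le_min ?_ ?_
    · have h := one_sub_sum_le_prod_one_sub Finset.univ (fun i => X i ω)
        (fun i _ => hω i)
      simp only [hg_def]
      linarith [h]
    · have : (0:ℝ) ≤ ∏ i, g i ω :=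
        Finset.prod_nonneg fun i _ => by simp [hg_def]; linarith [(hω i).2]
      linarith
  -- integrability of the two sides
  have hint_min : Integrable (fun ω => min (∑ i, X i ω) 1) ℙ := by
    refine Integrable.mono' (integrable_const (1:ℝ))
      ((Finset.measurable_sum Finset.univ fun i _ => hmeas i).min
        measurable_const).aestronglyMeasurable ?_
    filter_upwards [hae] with ω hω
    rw [Real.norm_eq_abs, abs_le]
    constructor
    · have : (0:ℝ) ≤ ∑ i, X i ω := Finset.sum_nonneg fun i _ => (hω i).1
      have := le_min this zero_le_one
      linarith
    · exact min_le_right _ _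
  have hint_prod : Integrable (fun ω => ∏ i, g i ω) ℙ := by
    refine Integrable.mono' (integrable_const (1:ℝ))
      (Finset.measurable_prod Finset.univ fun i _ => hgmeas i).aestronglyMeasurable ?_
    filter_upwards [hae] with ω hω
    rw [Real.norm_eq_abs, abs_le]
    constructor
    · have : (0:ℝ) ≤ ∏ i, g i ω :=
        Finset.prod_nonneg fun i _ => by simp [hg_def]; linarith [(hω i).2]
      linarith
    · refine Finset.prod_le_one (fun i _ => by simp [hg_def]; linarith [(hω i).2])
        (fun i _ => by simp [hg_def]; exact (hω i).1)
  -- integrate the pointwise bound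
  have hint_L : Integrable (fun ω => 1 - ∏ i, g i ω) ℙ :=
    (integrable_const (1:ℝ)).sub hint_prod
  have hL : ∫ ω, (1 - ∏ i, g i ω) ∂ℙ = 1 - ∏ i, (1 - μi i) := by
    rw [integral_sub (integrable_const 1) hint_prod, hprodint]
    simp
  have hstep1 : 1 - ∏ i, (1 - μi i) ≤ ∫ ω, min (∑ i, X i ω) 1 ∂ℙ := by
    have hmono := integral_mono_ae (f := fun ω => 1 - ∏ i, g i ω)
      (g := fun ω => min (∑ i, X i ω) 1) hint_L hint_min hpt
    rwa [hL] at hmono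
  -- product bound by exponential
  set μ : ℝ := ∑ i, μi i with hμ_def
  have hμ0 : 0 ≤ μ := Finset.sum_nonneg fun i _ => (hμi i).1
  have hstep2 : ∏ i, (1 - μi i) ≤ Real.exp (-μ) := by
    calc ∏ i, (1 - μi i) ≤ ∏ i, Real.exp (-(μi i)) := by
          refine Finset.prod_le_prod (fun i _ => by linarith [(hμi i).2]) ?_
          intro i _
          have := Real.add_one_le_exp (-(μi i))
          linarith
      _ = Real.exp (∑ i, -(μi i)) := by rw [Real.exp_sum]
      _ = Real.exp (-μ) := by rw [hμ_def, ← Finset.sum_neg_distrib]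
  -- final analytic inequality
  have hfinal : (1 - 1 / Real.exp 1) * min μ 1 ≤ 1 - Real.exp (-μ) := by
    have hpos : (0:ℝ) < Real.exp 1 := Real.exp_pos 1
    rcases le_or_gt 1 μ with h | h
    · rw [min_eq_right h]
      have h1 : Real.exp (-μ) ≤ Real.exp (-1) := Real.exp_le_exp.2 (by linarith)
      have h2 : Real.exp (-1) = (Real.exp 1)⁻¹ := Real.exp_neg 1
      rw [one_div]
      linarith
    · rw [min_eq_left h.le]
      have hc := convexOn_exp.2 (Set.mem_univ (0:ℝ)) (Set.mem_univ (-1:ℝ))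
        (by linarith : (0:ℝ) ≤ 1 - μ) hμ0 (by ring)
      simp only [smul_eq_mul, mul_zero, mul_neg_one, zero_add, Real.exp_zero,
        mul_one] at hc
      have he : Real.exp (-1) = (Real.exp 1)⁻¹ := Real.exp_neg 1
      rw [he] at hc
      rw [one_div]
      nlinarith [hc]
  calc (1 - 1 / Real.exp 1) * min (∫ ω, (∑ i, X i ω) ∂ℙ) 1
      = (1 - 1 / Real.exp 1) * min μ 1 := by rw [hEsum]
    _ ≤ 1 - Real.exp (-μ) := hfinal
    _ ≤ 1 - ∏ i, (1 - μi i) := by linarith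
    _ ≤ ∫ ω, min (∑ i, X i ω) 1 ∂ℙ := hstep1
end

section
/- Let C : Γ × [n] → ℝ≥0 be a nonnegative cost matrix with Γ a finite nonempty set and [n] = {1,...,n}. Then max over probability distributions p on [n] of (min_{I∈Γ} Σ_T p(T)·C(I,T)) / (Σ_T p(T)·T) equals min over probability distributions π on Γ of max_{T∈[n]} (Σ_I π(I)·C(I,T)) / T. -/
private lemma iInf_div_pos' {ι : Type*} [Fintype ι] [Nonempty ι] (f : ι → ℝ) {c : ℝ}
    (hc : 0 < c) : (⨅ i, f i) / c = ⨅ i, f i / c := by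
  obtain ⟨i₀, hi₀⟩ := exists_eq_ciInf_of_finite (f := f)
  refine le_antisymm (le_ciInf fun i => ?_) ?_
  · have h1 : (⨅ i, f i) ≤ f i := ciInf_le (Set.Finite.bddBelow (Set.finite_range _)) i
    gcongr
  · have h2 : (⨅ i, f i / c) ≤ f i₀ / c :=
      ciInf_le (Set.Finite.bddBelow (Set.finite_range _)) i₀
    rwa [hi₀] at h2

/-- Core separation step: if every mixed strategy `q` on columns has value (min over rows
of the `q`-average) at most `w`, then there is a mixed strategy `π` on rows whose average
is at most `w` in every column. -/
private lemma minimax_core {Γ : Type*} [Fintype Γ] [Nonempty Γ] {n : ℕ} (hn : 0 < n)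
    (D : Γ → Fin n → ℝ) (hD : ∀ I T, 0 ≤ D I T) (w : ℝ)
    (hq : ∀ q : Fin n → ℝ, (∀ T, 0 ≤ q T) → (∑ T, q T = 1) →
      (⨅ I, ∑ T, q T * D I T) ≤ w) :
    ∃ π : Γ → ℝ, (∀ I, 0 ≤ π I) ∧ (∑ I, π I = 1) ∧ ∀ T, ∑ I, π I * D I T ≤ w := by
  haveI : Nonempty (Fin n) := ⟨⟨0, hn⟩⟩
  classical
  set K : Set (Γ → ℝ) :=
    {x | ∃ q : Fin n → ℝ, (∀ T, 0 ≤ q T) ∧ (∑ T, q T = 1) ∧ x = fun I => ∑ T, q T * D I T}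
    with hK
  set U : Set (Γ → ℝ) := {x | ∀ I, w < x I} with hU
  have hKconv : Convex ℝ K := by
    rintro x ⟨q1, hq1, hq1s, rfl⟩ y ⟨q2, hq2, hq2s, rfl⟩ a b ha hb hab
    refine ⟨fun T => a * q1 T + b * q2 T,
      fun T => add_nonneg (mul_nonneg ha (hq1 T)) (mul_nonneg hb (hq2 T)), ?_, ?_⟩
    · rw [Finset.sum_add_distrib, ← Finset.mul_sum, ← Finset.mul_sum, hq1s, hq2s]
      linarith
    · funext I
      simp only [Pi.add_apply, Pi.smul_apply, smul_eq_mul]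
      rw [Finset.mul_sum, Finset.mul_sum, ← Finset.sum_add_distrib]
      exact Finset.sum_congr rfl fun T _ => by ring
  have hUconv : Convex ℝ U := by
    have hE : U = ⋂ I, {x : Γ → ℝ | w < x I} := by
      ext x; simp [hU, Set.mem_iInter]
    rw [hE]
    exact convex_iInter fun I =>
      convex_halfSpace_gt (IsLinearMap.mk (fun x y => rfl) fun c x => rfl) w
  have hUopen : IsOpen U := by
    have hE : U = ⋂ I, (fun x : Γ → ℝ => x I) ⁻¹' Set.Ioi w := by
      ext x; simp [hU, Set.mem_iInter]
    rw [hE]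
    exact isOpen_iInter_of_finite fun I => (isOpen_Ioi).preimage (continuous_apply I)
  have hdisj : Disjoint U K := by
    rw [Set.disjoint_left]
    rintro x hx ⟨q, hq0, hqs, rfl⟩
    have h1 : (⨅ I, ∑ T, q T * D I T) ≤ w := hq q hq0 hqs
    obtain ⟨I₀, hI₀⟩ := exists_eq_ciInf_of_finite (f := fun I => ∑ T, q T * D I T)
    have h2 : w < ∑ T, q T * D I₀ T := hx I₀
    have h3 : (∑ T, q T * D I₀ T) ≤ w := by rw [hI₀]; exact h1
    linarith
  obtain ⟨f, u, hfU, hfK⟩ := geometric_hahn_banach_open hUconv hUopen hKconv hdisj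
  set y : Γ → ℝ := fun I => f (fun j => if I = j then 1 else 0) with hy
  set σ : ℝ := ∑ I, y I with hσdef
  have hf : ∀ x : Γ → ℝ, f x = ∑ I, x I * y I := by
    intro x
    conv_lhs => rw [pi_eq_sum_univ x]
    rw [map_sum]
    exact Finset.sum_congr rfl fun I _ => by rw [map_smul, smul_eq_mul]
  have hconst : ∀ c : ℝ, f (fun _ => c) = c * σ := by
    intro c; rw [hf, hσdef, Finset.mul_sum]
  have hylem : ∀ I, y I ≤ 0 := by
    intro I
    by_contra h
    push_neg at h
    set t : ℝ := max 0 ((u - (w + 1) * σ) / y I) with htdef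
    have ht0 : 0 ≤ t := le_max_left _ _
    have hmem : ((fun _ : Γ => w + 1) + t • fun j => if I = j then (1 : ℝ) else 0) ∈ U := by
      intro J
      simp only [Pi.add_apply, Pi.smul_apply, smul_eq_mul]
      have hnn : 0 ≤ t * (if I = J then (1 : ℝ) else 0) := by
        apply mul_nonneg ht0; split <;> norm_num
      linarith
    have hlt := hfU _ hmem
    rw [map_add, map_smul, hconst, smul_eq_mul] at hlt
    have hfy : f (fun j => if I = j then (1 : ℝ) else 0) = y I := rfl
    rw [hfy] at hlt
    have h2 : (u - (w + 1) * σ) / y I ≤ t := le_max_right _ _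
    have h3 : u - (w + 1) * σ ≤ t * y I := by
      rw [div_le_iff₀ h] at h2; linarith
    linarith
  have hcol : ∀ T : Fin n, u ≤ ∑ I, D I T * y I := by
    intro T
    have hmemK : (fun I => D I T) ∈ K := by
      refine ⟨fun T' => if T' = T then 1 else 0,
        fun T' => by by_cases h : T' = T <;> simp [h], by simp, ?_⟩
      funext I
      simp [ite_mul]
    have := hfK _ hmemK
    rwa [hf] at this
  have hσw : ∀ ε : ℝ, 0 < ε → (w + ε) * σ < u := by
    intro ε hε
    have hmem : (fun _ : Γ => w + ε) ∈ U := fun I => by simp; linarith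
    have := hfU _ hmem
    rwa [hconst] at this
  have hσ0 : σ ≤ 0 := Finset.sum_nonpos fun I _ => hylem I
  have hσ : σ < 0 := by
    rcases lt_or_eq_of_le hσ0 with h | h
    · exact h
    · exfalso
      have h1 := hσw 1 one_pos
      rw [h, mul_zero] at h1
      have T₀ : Fin n := ⟨0, hn⟩
      have h2 := hcol T₀
      have h3 : (∑ I, D I T₀ * y I) ≤ 0 :=
        Finset.sum_nonpos fun I _ => mul_nonpos_of_nonneg_of_nonpos (hD I T₀) (hylem I)
      linarith
  refine ⟨fun I => y I / σ, ?_, ?_, ?_⟩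
  · intro I
    have : (0 : ℝ) ≤ (-y I) / (-σ) := div_nonneg (by linarith [hylem I]) (by linarith)
    rwa [neg_div_neg_eq] at this
  · rw [← Finset.sum_div, ← hσdef, div_self hσ.ne]
  · intro T
    have h1 := hcol T
    have h2 : u / σ ≤ w := by
      by_contra h
      push_neg at h
      have h3 := hσw (u / σ - w) (by linarith)
      rw [show w + (u / σ - w) = u / σ by ring, div_mul_cancel₀ u hσ.ne] at h3
      exact lt_irrefl u h3
    have h4 : (∑ I, D I T * y I) / σ ≤ w := by
      rw [div_le_iff_of_neg hσ]
      rw [div_le_iff_of_neg hσ] at h2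
      linarith
    have h5 : ∑ I, y I / σ * D I T = (∑ I, D I T * y I) / σ := by
      rw [Finset.sum_div]
      exact Finset.sum_congr rfl fun I _ => by ring
    linarith [h5 ▸ h4]

set_option maxHeartbeats 1000000 in
/-- LP-duality/minimax lemma: for a nonnegative cost matrix C on Γ × [n] (Γ finite
nonempty, elements T of [n] = {1,…,n} encoded as Fin n with value T+1),
  max_{p ∈ Δ([n])} (min_{I∈Γ} Σ_T p(T)·C(I,T)) / (Σ_T p(T)·T)
    = min_{π ∈ Δ(Γ)} max_{T∈[n]} (Σ_I π(I)·C(I,T)) / T. -/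
theorem stmt6 {Γ : Type*} [Fintype Γ] [Nonempty Γ] (n : ℕ) (hn : 0 < n)
    (C : Γ → Fin n → ℝ) (hC : ∀ I T, 0 ≤ C I T) :
    (⨆ p : {p : Fin n → ℝ // (∀ T, 0 ≤ p T) ∧ ∑ T, p T = 1},
        (⨅ I : Γ, ∑ T, p.1 T * C I T) / (∑ T, p.1 T * ((T : ℝ) + 1)))
      = ⨅ π : {π : Γ → ℝ // (∀ I, 0 ≤ π I) ∧ ∑ I, π I = 1},
          ⨆ T : Fin n, (∑ I, π.1 I * C I T) / ((T : ℝ) + 1) := by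
  classical
  haveI : Nonempty (Fin n) := ⟨⟨0, hn⟩⟩
  set D : Γ → Fin n → ℝ := fun I T => C I T / ((T : ℝ) + 1) with hDdef
  have hT1 : ∀ T : Fin n, (0 : ℝ) < (T : ℝ) + 1 := fun T => by positivity
  have hDpos : ∀ I T, 0 ≤ D I T := fun I T => div_nonneg (hC I T) (hT1 T).le
  haveI hPne : Nonempty {p : Fin n → ℝ // (∀ T, 0 ≤ p T) ∧ ∑ T, p T = 1} := by
    refine ⟨⟨fun _ => (n : ℝ)⁻¹, fun T => by positivity, ?_⟩⟩
    rw [Finset.sum_const, Finset.card_univ, Fintype.card_fin, nsmul_eq_mul,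
      mul_inv_cancel₀ (by exact_mod_cast hn.ne' : (n : ℝ) ≠ 0)]
  haveI hQne : Nonempty {π : Γ → ℝ // (∀ I, 0 ≤ π I) ∧ ∑ I, π I = 1} := by
    refine ⟨⟨fun _ => (Fintype.card Γ : ℝ)⁻¹, fun I => by positivity, ?_⟩⟩
    rw [Finset.sum_const, Finset.card_univ, nsmul_eq_mul,
      mul_inv_cancel₀ (by exact_mod_cast Fintype.card_pos.ne' : (Fintype.card Γ : ℝ) ≠ 0)]
  -- change of variables p → q
  have hPQ : ∀ p : Fin n → ℝ, (∀ T, 0 ≤ p T) → (∑ T, p T = 1) →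
      ∃ q : Fin n → ℝ, (∀ T, 0 ≤ q T) ∧ (∑ T, q T = 1) ∧
        (⨅ I : Γ, ∑ T, p T * C I T) / (∑ T, p T * ((T : ℝ) + 1))
          = ⨅ I : Γ, ∑ T, q T * D I T := by
    intro p hp hps
    set S := ∑ T, p T * ((T : ℝ) + 1) with hS
    have hS1 : (1 : ℝ) ≤ S := by
      rw [← hps]
      refine Finset.sum_le_sum fun T _ => ?_
      have h0 : (0 : ℝ) ≤ (T : ℝ) := by positivity
      nlinarith [hp T]
    have hSpos : (0 : ℝ) < S := lt_of_lt_of_le one_pos hS1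
    refine ⟨fun T => p T * ((T : ℝ) + 1) / S,
      fun T => div_nonneg (mul_nonneg (hp T) (hT1 T).le) hSpos.le, ?_, ?_⟩
    · rw [← Finset.sum_div, ← hS, div_self hSpos.ne']
    · rw [iInf_div_pos' _ hSpos]
      refine congrArg _ (funext fun I => ?_)
      rw [Finset.sum_div]
      refine Finset.sum_congr rfl fun T _ => ?_
      simp only [hDdef]
      field_simp
      try ring
  -- change of variables q → p
  have hQP : ∀ q : Fin n → ℝ, (∀ T, 0 ≤ q T) → (∑ T, q T = 1) →
      ∃ p : Fin n → ℝ, (∀ T, 0 ≤ p T) ∧ (∑ T, p T = 1) ∧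
        (⨅ I : Γ, ∑ T, q T * D I T)
          = (⨅ I : Γ, ∑ T, p T * C I T) / (∑ T, p T * ((T : ℝ) + 1)) := by
    intro q hq hqs
    set S' := ∑ T, q T / ((T : ℝ) + 1) with hS'
    have hS'pos : (0 : ℝ) < S' := by
      obtain ⟨T₀, hT₀⟩ : ∃ T, 0 < q T := by
        by_contra h
        push_neg at h
        have h0 : ∑ T, q T = 0 := Finset.sum_eq_zero fun T _ => le_antisymm (h T) (hq T)
        rw [hqs] at h0
        norm_num at h0
      exact Finset.sum_pos' (fun T _ => div_nonneg (hq T) (hT1 T).le)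
        ⟨T₀, Finset.mem_univ _, div_pos hT₀ (hT1 T₀)⟩
    refine ⟨fun T => q T / ((T : ℝ) + 1) / S',
      fun T => div_nonneg (div_nonneg (hq T) (hT1 T).le) hS'pos.le, ?_, ?_⟩
    · rw [← Finset.sum_div, ← hS', div_self hS'pos.ne']
    · have hden : (∑ T, q T / ((T : ℝ) + 1) / S' * ((T : ℝ) + 1)) = 1 / S' := by
        have hterm : ∀ T : Fin n, q T / ((T : ℝ) + 1) / S' * ((T : ℝ) + 1)
            = q T * (1 / S') := fun T => by
          field_simp
          try ring
        rw [Finset.sum_congr rfl fun T _ => hterm T, ← Finset.sum_mul, hqs, one_mul]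
      have hnum : (⨅ I : Γ, ∑ T, q T / ((T : ℝ) + 1) / S' * C I T)
          = (⨅ I : Γ, ∑ T, q T * D I T) / S' := by
        rw [iInf_div_pos' _ hS'pos]
        refine congrArg _ (funext fun I => ?_)
        rw [Finset.sum_div]
        refine Finset.sum_congr rfl fun T _ => ?_
        simp only [hDdef]
        field_simp
        try ring
      rw [hnum, hden]
      field_simp
  -- upper bound for values
  set B : ℝ := ∑ I, ∑ T, C I T with hB
  have hDB : ∀ I T, D I T ≤ B := by
    intro I T
    have h1 : D I T ≤ C I T := by
      rw [hDdef]
      simp only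
      rw [div_le_iff₀ (hT1 T)]
      have h0 : (0 : ℝ) ≤ (T : ℝ) := by positivity
      nlinarith [hC I T]
    have h2 : C I T ≤ ∑ T', C I T' :=
      Finset.single_le_sum (fun T' _ => hC I T') (Finset.mem_univ T)
    have h3 : (∑ T', C I T') ≤ B :=
      Finset.single_le_sum (f := fun I' => ∑ T', C I' T')
        (fun I' _ => Finset.sum_nonneg fun T' _ => hC I' T') (Finset.mem_univ I)
    linarith
  have hFB : ∀ q : Fin n → ℝ, (∀ T, 0 ≤ q T) → (∑ T, q T = 1) →
      (⨅ I : Γ, ∑ T, q T * D I T) ≤ B := by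
    intro q hq hqs
    have I₀ : Γ := Classical.arbitrary Γ
    calc (⨅ I : Γ, ∑ T, q T * D I T) ≤ ∑ T, q T * D I₀ T :=
          ciInf_le (Set.Finite.bddBelow (Set.finite_range _)) I₀
      _ ≤ ∑ T, q T * B :=
          Finset.sum_le_sum fun T _ => mul_le_mul_of_nonneg_left (hDB I₀ T) (hq T)
      _ = B := by rw [← Finset.sum_mul, hqs, one_mul]
  have hbddP : BddAbove (Set.range fun p : {p : Fin n → ℝ // (∀ T, 0 ≤ p T) ∧ ∑ T, p T = 1} =>
      (⨅ I : Γ, ∑ T, p.1 T * C I T) / (∑ T, p.1 T * ((T : ℝ) + 1))) := by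
    refine ⟨B, ?_⟩
    rintro _ ⟨p, rfl⟩
    obtain ⟨q, hq0, hqs, hval⟩ := hPQ p.1 p.2.1 p.2.2
    simp only
    rw [hval]
    exact hFB q hq0 hqs
  have hDQ : ∀ (π : Γ → ℝ) (T : Fin n),
      ∑ I, π I * D I T = (∑ I, π I * C I T) / ((T : ℝ) + 1) := by
    intro π T
    rw [Finset.sum_div]
    exact Finset.sum_congr rfl fun I _ => by simp only [hDdef]; rw [mul_div_assoc]
  apply le_antisymm
  · -- weak duality
    apply ciSup_le
    intro p
    apply le_ciInf
    intro π
    obtain ⟨q, hq0, hqs, hval⟩ := hPQ p.1 p.2.1 p.2.2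
    rw [hval]
    have hstep1 : (⨅ I : Γ, ∑ T, q T * D I T) ≤ ∑ I, π.1 I * ∑ T, q T * D I T := by
      calc (⨅ I : Γ, ∑ T, q T * D I T)
          = ∑ I, π.1 I * (⨅ I' : Γ, ∑ T, q T * D I' T) := by
            rw [← Finset.sum_mul, π.2.2, one_mul]
        _ ≤ ∑ I, π.1 I * ∑ T, q T * D I T :=
            Finset.sum_le_sum fun I _ => mul_le_mul_of_nonneg_left
              (ciInf_le (Set.Finite.bddBelow (Set.finite_range _)) I) (π.2.1 I)
    have hswap : ∑ I, π.1 I * ∑ T, q T * D I T = ∑ T, q T * ∑ I, π.1 I * D I T := by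
      simp only [Finset.mul_sum]
      rw [Finset.sum_comm]
      exact Finset.sum_congr rfl fun T _ => Finset.sum_congr rfl fun I _ => by ring
    have hstep2 : (∑ T, q T * ∑ I, π.1 I * D I T)
        ≤ ⨆ T : Fin n, (∑ I, π.1 I * C I T) / ((T : ℝ) + 1) := by
      calc (∑ T, q T * ∑ I, π.1 I * D I T)
          ≤ ∑ T, q T * (⨆ T' : Fin n, (∑ I, π.1 I * C I T') / ((T' : ℝ) + 1)) := by
            refine Finset.sum_le_sum fun T _ => mul_le_mul_of_nonneg_left ?_ (hq0 T)
            rw [hDQ π.1 T]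
            exact le_ciSup (f := fun T' : Fin n => (∑ I, π.1 I * C I T') / ((T' : ℝ) + 1))
              (Set.Finite.bddAbove (Set.finite_range _)) T
        _ = _ := by rw [← Finset.sum_mul, hqs, one_mul]
    linarith
  · -- strong duality
    have hw : ∀ q : Fin n → ℝ, (∀ T, 0 ≤ q T) → (∑ T, q T = 1) →
        (⨅ I : Γ, ∑ T, q T * D I T)
          ≤ ⨆ p : {p : Fin n → ℝ // (∀ T, 0 ≤ p T) ∧ ∑ T, p T = 1},
              (⨅ I : Γ, ∑ T, p.1 T * C I T) / (∑ T, p.1 T * ((T : ℝ) + 1)) := by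
      intro q hq0 hqs
      obtain ⟨p, hp0, hps, hval⟩ := hQP q hq0 hqs
      rw [hval]
      exact le_ciSup hbddP ⟨p, hp0, hps⟩
    obtain ⟨π, hπ0, hπs, hπ⟩ := minimax_core hn D hDpos _ hw
    have hπval : (⨆ T : Fin n, (∑ I, π I * C I T) / ((T : ℝ) + 1))
        ≤ ⨆ p : {p : Fin n → ℝ // (∀ T, 0 ≤ p T) ∧ ∑ T, p T = 1},
            (⨅ I : Γ, ∑ T, p.1 T * C I T) / (∑ T, p.1 T * ((T : ℝ) + 1)) := by
      apply ciSup_le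
      intro T
      rw [← hDQ π T]
      exact hπ T
    refine le_trans (ciInf_le (f := fun π' : {π : Γ → ℝ // (∀ I, 0 ≤ π I) ∧ ∑ I, π I = 1} =>
      ⨆ T : Fin n, (∑ I, π'.1 I * C I T) / ((T : ℝ) + 1)) ?_ ⟨π, hπ0, hπs⟩) hπval
    refine ⟨0, ?_⟩
    rintro _ ⟨π', rfl⟩
    simp only
    have T₀ : Fin n := ⟨0, hn⟩
    refine le_trans ?_ (le_ciSup (Set.Finite.bddAbove (Set.finite_range _)) T₀)
    exact div_nonneg (Finset.sum_nonneg fun I _ => mul_nonneg (π'.2.1 I) (hC I T₀)) (hT1 T₀).le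
end

section
/- In the deterministic knapsack cover instance with target k = 2^ℓ and items consisting of, for each i ∈ {0,...,ℓ}, one item of cost 2^i and reward 2^i together with ℓ−1 items of cost 2^i and reward 1, the optimal cost is exactly 2^ℓ (achieved by taking the single item of cost and reward 2^ℓ). -/
/-- Deterministic knapsack cover instance with target k = 2^ℓ: items indexed by
(i, j) ∈ {0,…,ℓ} × {0,…,ℓ-1}, where item (i, j) has cost 2^i, and reward 2^i if
j = 0 (one such item per i) and reward 1 otherwise (ℓ-1 such items per i).
The optimal cost is exactly 2^ℓ. -/
theorem stmt8 (ℓ : ℕ) (hℓ : 1 ≤ ℓ) :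
    IsLeast {c : ℕ | ∃ S : Finset (Fin (ℓ + 1) × Fin ℓ),
        2 ^ ℓ ≤ (∑ x ∈ S, if (x.2 : ℕ) = 0 then 2 ^ (x.1 : ℕ) else 1) ∧
        c = ∑ x ∈ S, 2 ^ (x.1 : ℕ)}
      (2 ^ ℓ) := by
  constructor
  · refine ⟨{(Fin.last ℓ, ⟨0, hℓ⟩)}, ?_, ?_⟩ <;> simp
  · rintro c ⟨S, hS, rfl⟩
    refine le_trans hS (Finset.sum_le_sum fun x _ => ?_)
    split
    · exact le_rfl
    · exact Nat.one_le_two_pow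
end

section
/- In the stochastic covering knapsack instance with target k = 2^{n+1}, a zero-cost random item r taking reward k − 2^i with probability p_i (for i ∈ [n], Σ p_i = 1), and deterministic items u_1,...,u_n where u_i has cost i and reward 2^i, the optimal adaptive policy has expected cost exactly Σ_{i=1}^n i·p_i. -/
lemma aux14 (n : ℕ) (i : Fin n) (S : Finset (Fin n))
    (h : (2 : ℕ) ^ ((i : ℕ) + 1) ≤ ∑ j ∈ S, 2 ^ ((j : ℕ) + 1)) :
    ((i : ℕ) + 1 : ℝ) ≤ ∑ j ∈ S, ((j : ℕ) + 1 : ℝ) := by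
  -- there exists j ∈ S with i ≤ j
  obtain ⟨j, hj, hij⟩ : ∃ j ∈ S, (i : ℕ) ≤ (j : ℕ) := by
    by_contra hcon
    push_neg at hcon
    have hsub : S.image (Fin.val) ⊆ Finset.range (i : ℕ) := by
      intro m hm
      simp only [Finset.mem_image] at hm
      obtain ⟨j, hj, rfl⟩ := hm
      exact Finset.mem_range.mpr (hcon j hj)
    have h1 : ∑ j ∈ S, 2 ^ ((j : ℕ) + 1) = ∑ m ∈ S.image Fin.val, 2 ^ (m + 1) := by
      rw [Finset.sum_image (fun a _ b _ h => Fin.val_injective h)]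
    have h2 : ∑ m ∈ S.image Fin.val, 2 ^ (m + 1) ≤ ∑ m ∈ Finset.range (i : ℕ), 2 ^ (m + 1) :=
      Finset.sum_le_sum_of_subset hsub
    have h3 : ∀ m : ℕ, ∑ x ∈ Finset.range m, 2 ^ (x + 1) = 2 ^ (m + 1) - 2 := by
      intro m
      induction m with
      | zero => simp
      | succ k ih =>
          rw [Finset.sum_range_succ, ih]
          have e1 : (2:ℕ) ^ 1 ≤ 2 ^ (k + 1) := Nat.pow_le_pow_right (by norm_num) (by omega)
          rw [pow_one] at e1
          have e2 : 2 ^ (k + 1 + 1) = 2 * 2 ^ (k + 1) := by ring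
          omega
    have h5 := h3 (i : ℕ)
    have h4 : (2:ℕ) ^ 1 ≤ 2 ^ ((i : ℕ) + 1) := Nat.pow_le_pow_right (by norm_num) (by omega)
    rw [pow_one] at h4
    rw [h1] at h
    omega
  calc ((i : ℕ) + 1 : ℝ) ≤ ((j : ℕ) + 1 : ℝ) := by exact_mod_cast Nat.succ_le_succ hij
    _ ≤ ∑ j ∈ S, ((j : ℕ) + 1 : ℝ) :=
        Finset.single_le_sum (f := fun j : Fin n => ((j : ℕ) + 1 : ℝ)) (fun a _ => by positivity) hj

/-- Adaptivity-gap instance: target k = 2^{n+1}; the zero-cost random item r takes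
reward k - 2^{i+1} with probability p_{i+1} (i : Fin n encodes index i+1 ∈ [n]);
deterministic item u_{j+1} has cost j+1 and reward 2^{j+1}. An adaptive policy first
takes r and then, having observed outcome i (residual target 2^{i+1}), chooses a set
S i of deterministic items covering the residual. The optimal adaptive expected cost
is exactly Σ_{i=1}^n i·p_i. -/
theorem stmt14 (n : ℕ) (hn : 0 < n) (p : Fin n → ℝ)
    (hp : ∀ i, 0 ≤ p i) (hp1 : ∑ i, p i = 1) :
    IsLeast {c : ℝ | ∃ S : Fin n → Finset (Fin n),
        (∀ i : Fin n, (2 : ℕ) ^ ((i : ℕ) + 1) ≤ ∑ j ∈ S i, 2 ^ ((j : ℕ) + 1)) ∧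
        c = ∑ i, p i * ∑ j ∈ S i, ((j : ℕ) + 1 : ℝ)}
      (∑ i, p i * ((i : ℕ) + 1 : ℝ)) := by
  constructor
  · exact ⟨fun i => {i}, fun i => by simp, by simp⟩
  · rintro c ⟨S, hcov, rfl⟩
    exact Finset.sum_le_sum fun i _ =>
      mul_le_mul_of_nonneg_left (aux14 n i (S i) (hcov i)) (hp i)
end

section
/- For the sequences in the non-adaptive algorithm analysis: if u_i ≤ u_{i-1}/4 + u*_i for all i ≥ 1, u*_0 = 1, the algorithm's expected length satisfies ALG ≤ 2ℓα·Σ_{i≥1} 2^i u_i + 4ℓα, and OPT ≥ (1/2)·Σ_{i≥1} 2^i u*_i + 1, then ALG ≤ 8ℓα·OPT. -/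
/-- Non-adaptive analysis wrap-up: if u_i ≤ u_{i-1}/4 + u*_i for i ≥ 1, u*_0 = 1,
u_0 ≤ 1 (the u_i are probabilities), ALG ≤ 2ℓα·Σ_{i≥1} 2^i u_i + 4ℓα, and
OPT ≥ (1/2)·Σ_{i≥1} 2^i u*_i + 1, then ALG ≤ 8ℓα·OPT. -/
theorem stmt18 (u v : ℕ → ℝ) (hu : ∀ i, 0 ≤ u i) (hv : ∀ i, 0 ≤ v i)
    (hrec : ∀ i, u (i + 1) ≤ u i / 4 + v (i + 1)) (hv0 : v 0 = 1) (hu0 : u 0 ≤ 1)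
    (hT : Summable (fun i => (2 : ℝ) ^ (i + 1) * u (i + 1)))
    (hS : Summable (fun i => (2 : ℝ) ^ (i + 1) * v (i + 1)))
    (ℓ α ALG OPT : ℝ) (hℓ : 0 < ℓ) (hα : 0 < α)
    (hALG : ALG ≤ 2 * ℓ * α * (∑' i, (2 : ℝ) ^ (i + 1) * u (i + 1)) + 4 * ℓ * α)
    (hOPT : (1 / 2) * (∑' i, (2 : ℝ) ^ (i + 1) * v (i + 1)) + 1 ≤ OPT) :
    ALG ≤ 8 * ℓ * α * OPT := by
  set T := ∑' i, (2 : ℝ) ^ (i + 1) * u (i + 1) with hTdef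
  set S := ∑' i, (2 : ℝ) ^ (i + 1) * v (i + 1) with hSdef
  have hT0 : 0 ≤ T := tsum_nonneg fun i => mul_nonneg (by positivity) (hu _)
  have hS0 : 0 ≤ S := tsum_nonneg fun i => mul_nonneg (by positivity) (hv _)
  -- key bound : T ≤ u 0 + 2 * S
  have hf : Summable (fun i => (2 : ℝ) ^ i * u i) := by
    rw [← summable_nat_add_iff 1]; exact hT
  have hsum : Summable (fun i => (1 / 2 : ℝ) * ((2 : ℝ) ^ i * u i)
      + (2 : ℝ) ^ (i + 1) * v (i + 1)) := ((hf.mul_left _).add hS)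
  have hle : T ≤ ∑' i, ((1 / 2 : ℝ) * ((2 : ℝ) ^ i * u i)
      + (2 : ℝ) ^ (i + 1) * v (i + 1)) := by
    apply Summable.tsum_le_tsum _ hT hsum
    intro i
    have := hrec i
    have h2 : (0 : ℝ) < 2 ^ (i + 1) := by positivity
    have : (2 : ℝ) ^ (i + 1) * u (i + 1) ≤ (2 : ℝ) ^ (i + 1) * (u i / 4 + v (i + 1)) :=
      by nlinarith
    calc (2 : ℝ) ^ (i + 1) * u (i + 1)
        ≤ (2 : ℝ) ^ (i + 1) * (u i / 4 + v (i + 1)) := this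
      _ = (1 / 2 : ℝ) * ((2 : ℝ) ^ i * u i) + (2 : ℝ) ^ (i + 1) * v (i + 1) := by
          ring
  have hsplit : (∑' i, ((1 / 2 : ℝ) * ((2 : ℝ) ^ i * u i)
      + (2 : ℝ) ^ (i + 1) * v (i + 1)))
      = (1 / 2) * (∑' i, (2 : ℝ) ^ i * u i) + S := by
    rw [Summable.tsum_add (hf.mul_left _) hS, tsum_mul_left]
  have hf0 : (∑' i, (2 : ℝ) ^ i * u i) = (2 : ℝ) ^ 0 * u 0 + T := by
    rw [Summable.tsum_eq_zero_add hf]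
  have hTbound : T ≤ u 0 + 2 * S := by
    rw [hsplit, hf0] at hle
    simp at hle
    linarith
  have hℓα : 0 < ℓ * α := mul_pos hℓ hα
  nlinarith [mul_le_mul_of_nonneg_left hTbound (le_of_lt (by nlinarith : (0:ℝ) < 2 * ℓ * α)),
    mul_le_mul_of_nonneg_left hOPT (le_of_lt (by nlinarith : (0:ℝ) < 8 * ℓ * α))]
end

section
/- Let p_i ≥ 0, Σ_{i=1}^n p_i = 1, and for T ∈ [n] let C(I,T) be the online-bidding cost of increasing sequence I under threshold T. If every randomized bidding strategy (distribution π over increasing sequences Γ) satisfies max_{T∈[n]} E_{I~π}[C(I,T)]/T ≥ e − ε, then there exists a distribution p on [n] such that min_{I∈Γ} E_{T~p}[C(I,T)]/E_{T~p}[T] ≥ e − ε. -/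
/-- Online-bidding cost: bid sequences on [n+1] are sets I of Fin (n+1), where
element b encodes the bid value b+1; the threshold T encodes the value T+1.
C(I,T) is the sum of the bid values up to and including the first bid ≥ T. -/
noncomputable def bidCost {n : ℕ} (I : Finset (Fin n)) (T : Fin n) : ℕ :=
  ∑ b ∈ I.filter (fun b => b.val ≤ sInf {x : ℕ | ∃ b' ∈ I, T ≤ b' ∧ (b' : ℕ) = x}),
    ((b : ℕ) + 1)

set_option maxHeartbeats 1000000 in
/-- If every randomized bidding strategy π over increasing sequences Γ (sets
containing the top bid n) satisfies max_T E_π[C(I,T)]/T ≥ e - ε, then there is a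
distribution p on thresholds with min_I E_p[C(I,T)]/E_p[T] ≥ e - ε. -/
theorem stmt19 (n : ℕ) (ε : ℝ)
    (h : ∀ π : {I : Finset (Fin (n + 1)) // Fin.last n ∈ I} → ℝ,
        (∀ I, 0 ≤ π I) → (∑ I, π I) = 1 →
        ∃ T : Fin (n + 1),
          Real.exp 1 - ε ≤ (∑ I, π I * (bidCost I.1 T : ℝ)) / ((T : ℝ) + 1)) :
    ∃ p : Fin (n + 1) → ℝ, (∀ T, 0 ≤ p T) ∧ (∑ T, p T) = 1 ∧
      ∀ I : {I : Finset (Fin (n + 1)) // Fin.last n ∈ I},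
        Real.exp 1 - ε
          ≤ (∑ T, p T * (bidCost I.1 T : ℝ)) / (∑ T, p T * ((T : ℝ) + 1)) := by
  classical
  by_contra hcon
  push_neg at hcon
  set e : ℝ := Real.exp 1 - ε with he
  set Γ := {I : Finset (Fin (n + 1)) // Fin.last n ∈ I} with hΓ
  set A : Γ → Fin (n + 1) → ℝ :=
    fun I T => (bidCost I.1 T : ℝ) - e * ((T : ℝ) + 1) with hA
  set L : (Fin (n + 1) → ℝ) → (Γ → ℝ) := fun p I => ∑ T, p T * A I T with hL
  have hsplit : ∀ (p : Fin (n + 1) → ℝ) (I : Γ),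
      L p I = (∑ T, p T * (bidCost I.1 T : ℝ)) - e * ∑ T, p T * ((T : ℝ) + 1) := by
    intro p I
    simp only [hL, hA, mul_sub]
    rw [Finset.sum_sub_distrib, Finset.mul_sum]
    congr 1
    apply Finset.sum_congr rfl
    intros; ring
  have hLlin : IsLinearMap ℝ L := by
    constructor
    · intro p q
      funext I
      simp only [hL, Pi.add_apply, add_mul]
      rw [Finset.sum_add_distrib]
    · intro c p
      funext I
      simp only [hL, Pi.smul_apply, smul_eq_mul, Finset.mul_sum, mul_assoc]
  have hLcont : Continuous L :=
    continuous_pi fun I => continuous_finset_sum _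
      fun T _ => (continuous_apply T).mul continuous_const
  set Sx := stdSimplex ℝ (Fin (n + 1)) with hSx
  set K := L '' Sx with hK
  set O : Set (Γ → ℝ) := {q | ∀ I, 0 ≤ q I} with hO
  have hdisj : Disjoint K O := by
    rw [Set.disjoint_left]
    rintro q ⟨p, hp, rfl⟩ hq
    obtain ⟨I, hI⟩ := hcon p hp.1 hp.2
    have hden : (1 : ℝ) ≤ ∑ T, p T * ((T : ℝ) + 1) := by
      calc (1 : ℝ) = ∑ T, p T := hp.2.symm
        _ ≤ ∑ T, p T * ((T : ℝ) + 1) := by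
            apply Finset.sum_le_sum
            intro T _
            have h1 : (1 : ℝ) ≤ (T : ℝ) + 1 := by
              have : (0 : ℝ) ≤ (T : ℝ) := Nat.cast_nonneg _
              linarith
            exact le_mul_of_one_le_right (hp.1 T) h1
    have h0 : 0 ≤ L p I := hq I
    rw [hsplit] at h0
    have hle : e ≤ (∑ T, p T * (bidCost I.1 T : ℝ)) / (∑ T, p T * ((T : ℝ) + 1)) := by
      rw [le_div_iff₀ (by linarith)]
      linarith
    exact absurd hle (not_le.2 hI)
  have hKcomp : IsCompact K := (isCompact_stdSimplex ℝ (Fin (n + 1))).image hLcont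
  have hKconv : Convex ℝ K := (convex_stdSimplex ℝ _).is_linear_image hLlin
  have hOconv : Convex ℝ O := by
    intro x hx y hy a b ha hb hab
    intro I
    simp only [Pi.add_apply, Pi.smul_apply, smul_eq_mul]
    exact add_nonneg (mul_nonneg ha (hx I)) (mul_nonneg hb (hy I))
  have hOclosed : IsClosed O := by
    have hOeq : O = ⋂ I, {q : Γ → ℝ | 0 ≤ q I} := by
      ext q; simp [hO, Set.mem_iInter]
    rw [hOeq]
    exact isClosed_iInter fun I => isClosed_le continuous_const (continuous_apply I)
  obtain ⟨f, u, v, hfK, huv, hfO⟩ :=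
    geometric_hahn_banach_compact_closed hKconv hKcomp hOconv hOclosed hdisj
  have hv0 : v < 0 := by
    have h0O : (0 : Γ → ℝ) ∈ O := fun I => le_refl 0
    have := hfO 0 h0O
    simpa using this
  have hfOnonneg : ∀ q ∈ O, 0 ≤ f q := by
    intro q hq
    by_contra hneg
    push_neg at hneg
    have ht : (0 : ℝ) < v / f q := div_pos_of_neg_of_neg hv0 hneg
    have hmem : (v / f q) • q ∈ O := by
      intro I
      simp only [Pi.smul_apply, smul_eq_mul]
      exact mul_nonneg ht.le (hq I)
    have hlt := hfO _ hmem
    rw [map_smul, smul_eq_mul, div_mul_cancel₀ _ (ne_of_lt hneg)] at hlt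
    exact lt_irrefl v hlt
  set y : Γ → ℝ := fun I => f (Pi.single I 1) with hy
  have hy0 : ∀ I, 0 ≤ y I := by
    intro I
    apply hfOnonneg
    intro J
    by_cases hIJ : J = I <;> simp [Pi.single_apply, hIJ]
  have hfq : ∀ q : Γ → ℝ, f q = ∑ I, q I * y I := by
    intro q
    have hqeq : q = ∑ I : Γ, q I • (Pi.single I (1 : ℝ) : Γ → ℝ) := by
      funext J
      rw [Finset.sum_apply]
      simp [Pi.single_apply]
      rw [Finset.sum_eq_single J (fun b _ hb => if_neg (Ne.symm hb)) (fun h => absurd (Finset.mem_univ J) h), if_pos rfl]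
    conv_lhs => rw [hqeq]
    rw [map_sum]
    simp [hy, smul_eq_mul]
  have hsingle : ∀ T : Fin (n + 1), Pi.single T (1 : ℝ) ∈ Sx := by
    intro T
    refine ⟨?_, ?_⟩
    · intro T'
      by_cases hT' : T' = T <;> simp [Pi.single_apply, hT']
    · simp [Pi.single_apply]
  set Ssum := ∑ I, y I with hSsum
  have hSnn : 0 ≤ Ssum := Finset.sum_nonneg fun I _ => hy0 I
  have hSpos : 0 < Ssum := by
    rcases hSnn.lt_or_eq with hlt | heq
    · exact hlt
    · exfalso
      have hall : ∀ I : Γ, y I = 0 := by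
        intro I
        exact (Finset.sum_eq_zero_iff_of_nonneg fun I _ => hy0 I).1 heq.symm I
          (Finset.mem_univ I)
      have hk : L (Pi.single 0 1) ∈ K := ⟨_, hsingle 0, rfl⟩
      have h1 := hfK _ hk
      rw [hfq] at h1
      simp only [hall, mul_zero, Finset.sum_const_zero] at h1
      linarith
  set π : Γ → ℝ := fun I => y I / Ssum with hπ
  have hπ0 : ∀ I, 0 ≤ π I := fun I => div_nonneg (hy0 I) hSnn
  have hπsum : ∑ I, π I = 1 := by
    simp only [hπ]
    rw [← Finset.sum_div, ← hSsum, div_self hSpos.ne']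
  obtain ⟨T, hT⟩ := h π hπ0 hπsum
  have hTpos : (0 : ℝ) < (T : ℝ) + 1 := by positivity
  have hnum : e * ((T : ℝ) + 1) ≤ ∑ I, π I * (bidCost I.1 T : ℝ) :=
    (le_div_iff₀ hTpos).1 hT
  have hAnn : 0 ≤ ∑ I, π I * A I T := by
    have expand : ∑ I, π I * A I T
        = (∑ I, π I * (bidCost I.1 T : ℝ)) - e * ((T : ℝ) + 1) := by
      simp only [hA, mul_sub]
      rw [Finset.sum_sub_distrib, ← Finset.sum_mul, hπsum, one_mul]
    rw [expand]
    linarith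
  have hqI : ∀ I : Γ, L (Pi.single T 1) I = A I T := by
    intro I
    simp [hL, Pi.single_apply, ite_mul]
  have hlt2 := hfK _ ⟨_, hsingle T, rfl⟩
  rw [hfq] at hlt2
  have heq2 : ∑ I, L (Pi.single T 1) I * y I = Ssum * ∑ I, π I * A I T := by
    rw [Finset.mul_sum]
    apply Finset.sum_congr rfl
    intro I _
    rw [hqI I]
    have hyI : y I = π I * Ssum := by
      rw [hπ]
      field_simp
    rw [hyI]; ring
  rw [heq2] at hlt2
  nlinarith [mul_nonneg hSpos.le hAnn]
end
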